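/- (Theorem 1(ii), strict positivity.) Suppose 0 < D_min ≤ D_j ≤ D_max for all j, m > p + 2, and h₊ : [0,∞) → ℝ is continuous with h₊(0) = 0 and 0 < h₊(A) ≤ C for all A > 0 and some constant C > 0. Fix i and y ∈ ℝ^m, and let G(A) = h₊(A)·(A + D_i)·L_RE(A). Then G attains its supremum over [0,∞) at some point Â ∈ (0,∞), and for every maximizer Â of G over [0,∞) the shrinkage estimate B̂ = D_i/(Â + D_i) satisfies 0 < B̂ < 1. -/

import Mathlib

open Matrix Topology Filter

/-- The covariance matrix `V(A) = diag(A + D₁, …, A + Dₘ)` of the Fay–Herriot model. -/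
noncomputable def Vmat {m : ℕ} (D : Fin m → ℝ) (A : ℝ) : Matrix (Fin m) (Fin m) ℝ :=
  Matrix.diagonal (fun j => A + D j)

/-- The matrix `P(A) = V(A)⁻¹ − V(A)⁻¹ X (Xᵀ V(A)⁻¹ X)⁻¹ Xᵀ V(A)⁻¹`. -/
noncomputable def Pmat {m p : ℕ} (X : Matrix (Fin m) (Fin p) ℝ) (D : Fin m → ℝ) (A : ℝ) :
    Matrix (Fin m) (Fin m) ℝ :=
  (Vmat D A)⁻¹ - (Vmat D A)⁻¹ * X * (Xᵀ * (Vmat D A)⁻¹ * X)⁻¹ * Xᵀ * (Vmat D A)⁻¹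

/-- The residual likelihood
`L_RE(A) = det(Xᵀ V(A)⁻¹ X)^(−1/2) · det(V(A))^(−1/2) · exp(−½ yᵀ P(A) y)`. -/
noncomputable def LRE {m p : ℕ} (X : Matrix (Fin m) (Fin p) ℝ) (D : Fin m → ℝ)
    (y : Fin m → ℝ) (A : ℝ) : ℝ :=
  ((Xᵀ * (Vmat D A)⁻¹ * X).det) ^ (-(1 : ℝ) / 2) * ((Vmat D A).det) ^ (-(1 : ℝ) / 2) *
    Real.exp (-(1 / 2) * (y ⬝ᵥ (Pmat X D A).mulVec y))

/-! ### Auxiliary definitions and lemmas -/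

/-- The inverse covariance matrix, written explicitly. -/
noncomputable def Wmat {m : ℕ} (D : Fin m → ℝ) (A : ℝ) : Matrix (Fin m) (Fin m) ℝ :=
  Matrix.diagonal (fun j => (A + D j)⁻¹)

lemma Vmat_inv {m : ℕ} (D : Fin m → ℝ) (A : ℝ) (h : ∀ j, A + D j ≠ 0) :
    (Vmat D A)⁻¹ = Wmat D A := by
  apply Matrix.inv_eq_right_inv
  rw [Vmat, Wmat, diagonal_mul_diagonal, ← Matrix.diagonal_one]
  exact congrArg _ (funext fun j => mul_inv_cancel₀ (h j))

lemma mulVec_inj_of_rank {m p : ℕ} (X : Matrix (Fin m) (Fin p) ℝ) (hX : X.rank = p)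
    (v : Fin p → ℝ) (hv : X *ᵥ v = 0) : v = 0 := by
  have h := LinearMap.finrank_range_add_finrank_ker X.mulVecLin
  rw [show Module.finrank ℝ (LinearMap.range X.mulVecLin) = X.rank from rfl, hX] at h
  simp [Module.finrank_fintype_fun_eq_card] at h
  have hker : LinearMap.ker X.mulVecLin = ⊥ := h
  have : v ∈ LinearMap.ker X.mulVecLin := by simpa [Matrix.mulVecLin_apply] using hv
  simpa [hker] using this

lemma posdef_sandwich {m p : ℕ} (X : Matrix (Fin m) (Fin p) ℝ) (hX : X.rank = p)
    (w : Fin m → ℝ) (hw : ∀ j, 0 < w j) :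
    (Xᵀ * Matrix.diagonal w * X).PosDef := by
  refine Matrix.PosDef.of_dotProduct_mulVec_pos ?_ ?_
  · show (Xᵀ * Matrix.diagonal w * X)ᴴ = _
    have : ∀ (N : Matrix (Fin p) (Fin p) ℝ), Nᴴ = Nᵀ := fun N => rfl
    rw [this, transpose_mul, transpose_mul, transpose_transpose, diagonal_transpose]
    exact (Matrix.mul_assoc _ _ _).symm
  · intro v hv
    have hXv : X *ᵥ v ≠ 0 := fun h => hv (mulVec_inj_of_rank X hX v h)
    have heq : star v ⬝ᵥ ((Xᵀ * Matrix.diagonal w * X) *ᵥ v)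
        = ∑ j, w j * (X *ᵥ v) j ^ 2 := by
      rw [show star v = v from rfl, ← Matrix.mulVec_mulVec, ← Matrix.mulVec_mulVec,
        dotProduct_mulVec, Matrix.vecMul_transpose]
      simp [dotProduct, Matrix.mulVec_diagonal]
      ring_nf
      exact Finset.sum_congr rfl fun j _ => by ring
    rw [heq]
    obtain ⟨j0, hj0⟩ := Function.ne_iff.mp hXv
    exact Finset.sum_pos' (fun j _ => mul_nonneg (hw j).le (sq_nonneg _))
      ⟨j0, Finset.mem_univ _, mul_pos (hw j0) (pow_two_pos_of_ne_zero hj0)⟩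

lemma psd_P {m p : ℕ} (X : Matrix (Fin m) (Fin p) ℝ) (w : Fin m → ℝ) (hw : ∀ j, 0 < w j)
    (hdet : IsUnit (Xᵀ * Matrix.diagonal w * X).det) :
    (Matrix.diagonal w - Matrix.diagonal w * X * (Xᵀ * Matrix.diagonal w * X)⁻¹ * Xᵀ *
      Matrix.diagonal w).PosSemidef := by
  set W : Matrix (Fin m) (Fin m) ℝ := Matrix.diagonal w with hW
  set M : Matrix (Fin p) (Fin p) ℝ := Xᵀ * W * X with hM
  set S : Matrix (Fin m) (Fin m) ℝ := Matrix.diagonal (fun j => Real.sqrt (w j)) with hS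
  have hSS : S * S = W := by
    rw [hS, diagonal_mul_diagonal]
    exact congrArg _ (funext fun j => Real.mul_self_sqrt (hw j).le)
  have hSS' : ∀ N : Matrix (Fin m) (Fin m) ℝ, S * (S * N) = W * N := fun N => by
    rw [← Matrix.mul_assoc, hSS]
  have hST : Sᵀ = S := diagonal_transpose _
  have hWT : Wᵀ = W := diagonal_transpose _
  have hMT : Mᵀ = M := by
    rw [hM, transpose_mul, transpose_mul, transpose_transpose, hWT]
    exact (Matrix.mul_assoc _ _ _).symm
  have hMinvT : (M⁻¹)ᵀ = M⁻¹ := by rw [Matrix.transpose_nonsing_inv, hMT]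
  have hMinv : ∀ N : Matrix (Fin p) (Fin m) ℝ,
      M⁻¹ * (Xᵀ * (W * (X * N))) = N := fun N => by
    have h1 : Xᵀ * (W * (X * N)) = M * N := by
      rw [hM]; simp only [Matrix.mul_assoc]
    rw [h1, ← Matrix.mul_assoc, Matrix.nonsing_inv_mul _ hdet, Matrix.one_mul]
  set B : Matrix (Fin m) (Fin m) ℝ := S - S * X * M⁻¹ * Xᵀ * W with hB
  have key : Bᵀ * B = W - W * X * M⁻¹ * Xᵀ * W := by
    have hBT : Bᵀ = S - W * (X * (M⁻¹ * (Xᵀ * S))) := by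
      rw [hB, transpose_sub, hST, transpose_mul, transpose_mul, transpose_mul, transpose_mul,
        hWT, hST, hMinvT, transpose_transpose]
    rw [hBT, hB]
    simp only [Matrix.sub_mul, Matrix.mul_sub, Matrix.mul_assoc, hSS', hSS, hMinv]
    abel
  have h2 := Matrix.posSemidef_conjTranspose_mul_self B
  have hH : Bᴴ = Bᵀ := rfl
  rwa [hH, key] at h2

section Main

variable {m p : ℕ} (X : Matrix (Fin m) (Fin p) ℝ) (D : Fin m → ℝ) (y : Fin m → ℝ)

/-- LRE in terms of `Wmat`. -/
lemma LRE_eq (A : ℝ) (h : ∀ j, 0 < A + D j) :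
    LRE X D y A =
      ((Xᵀ * Wmat D A * X).det) ^ (-(1 : ℝ) / 2) * (∏ j, (A + D j)) ^ (-(1 : ℝ) / 2) *
        Real.exp (-(1 / 2) * (y ⬝ᵥ (Wmat D A - Wmat D A * X * (Xᵀ * Wmat D A * X)⁻¹ * Xᵀ *
          Wmat D A).mulVec y)) := by
  have hne : ∀ j, A + D j ≠ 0 := fun j => (h j).ne'
  rw [LRE, Pmat, Vmat_inv D A hne, Vmat, Matrix.det_diagonal]

lemma detM_pos (hX : X.rank = p) (A : ℝ) (h : ∀ j, 0 < A + D j) :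
    0 < (Xᵀ * Wmat D A * X).det :=
  (posdef_sandwich X hX _ (fun j => inv_pos.mpr (h j))).det_pos

lemma LRE_pos (hX : X.rank = p) (A : ℝ) (h : ∀ j, 0 < A + D j) : 0 < LRE X D y A := by
  rw [LRE_eq X D y A h]
  have h1 := detM_pos X D hX A h
  have h2 : (0:ℝ) < ∏ j, (A + D j) := Finset.prod_pos fun j _ => h j
  positivity

lemma LRE_le (hX : X.rank = p) (A : ℝ) (h : ∀ j, 0 < A + D j) :
    LRE X D y A ≤
      ((Xᵀ * Wmat D A * X).det) ^ (-(1 : ℝ) / 2) * (∏ j, (A + D j)) ^ (-(1 : ℝ) / 2) := by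
  rw [LRE_eq X D y A h]
  have h1 := detM_pos X D hX A h
  have h2 : (0:ℝ) < ∏ j, (A + D j) := Finset.prod_pos fun j _ => h j
  have hq : 0 ≤ y ⬝ᵥ (Wmat D A - Wmat D A * X * (Xᵀ * Wmat D A * X)⁻¹ * Xᵀ *
      Wmat D A).mulVec y := by
    have := (psd_P X (fun j => (A + D j)⁻¹) (fun j => inv_pos.mpr (h j)) h1.ne'.isUnit).dotProduct_mulVec_nonneg y
    simpa [Wmat] using this
  have hexp : Real.exp (-(1 / 2) * (y ⬝ᵥ (Wmat D A - Wmat D A * X *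
      (Xᵀ * Wmat D A * X)⁻¹ * Xᵀ * Wmat D A).mulVec y)) ≤ 1 := by
    rw [Real.exp_le_one_iff]
    nlinarith
  calc _ ≤ ((Xᵀ * Wmat D A * X).det) ^ (-(1 : ℝ) / 2) * (∏ j, (A + D j)) ^ (-(1 : ℝ) / 2) * 1 := by
        apply mul_le_mul_of_nonneg_left hexp
        positivity
    _ = _ := mul_one _

end Main

section Cont

variable {m p : ℕ} (X : Matrix (Fin m) (Fin p) ℝ) (D : Fin m → ℝ) (y : Fin m → ℝ)

private lemma caMul {a b c : ℕ} {f : ℝ → Matrix (Fin a) (Fin b) ℝ}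
    {g : ℝ → Matrix (Fin b) (Fin c) ℝ} {x : ℝ}
    (hf : ContinuousAt f x) (hg : ContinuousAt g x) :
    ContinuousAt (fun t => f t * g t) x := by
  have hc : Continuous (fun q : Matrix (Fin a) (Fin b) ℝ × Matrix (Fin b) (Fin c) ℝ => q.1 * q.2) :=
    continuous_fst.matrix_mul continuous_snd
  exact hc.continuousAt.comp (ContinuousAt.prodMk hf hg)

lemma contAt_Wmat {A₀ : ℝ} (h : ∀ j, 0 < A₀ + D j) :
    ContinuousAt (fun A => Wmat D A) A₀ := by
  have hdiag : Continuous (fun v : Fin m → ℝ => Matrix.diagonal v) :=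
    Continuous.matrix_diagonal continuous_id
  have hent : ContinuousAt (fun A : ℝ => (fun j => (A + D j)⁻¹)) A₀ :=
    continuousAt_pi.2 fun j =>
      ((continuousAt_id.add continuousAt_const).inv₀ (h j).ne')
  exact hdiag.continuousAt.comp hent

lemma contAt_M {A₀ : ℝ} (h : ∀ j, 0 < A₀ + D j) :
    ContinuousAt (fun A => Xᵀ * Wmat D A * X) A₀ :=
  caMul (caMul continuousAt_const (contAt_Wmat D h)) continuousAt_const

lemma contAt_detM {A₀ : ℝ} (h : ∀ j, 0 < A₀ + D j) :
    ContinuousAt (fun A => (Xᵀ * Wmat D A * X).det) A₀ :=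
  (continuous_id.matrix_det).continuousAt.comp (contAt_M X D h)

lemma contAt_Minv (hX : X.rank = p) {A₀ : ℝ} (h : ∀ j, 0 < A₀ + D j) :
    ContinuousAt (fun A => (Xᵀ * Wmat D A * X)⁻¹) A₀ := by
  have heq : (fun A => (Xᵀ * Wmat D A * X)⁻¹)
      = fun A => ((Xᵀ * Wmat D A * X).det)⁻¹ • (Xᵀ * Wmat D A * X).adjugate := by
    funext A
    rw [Matrix.inv_def, Ring.inverse_eq_inv]
  rw [heq]
  exact ((contAt_detM X D h).inv₀ (detM_pos X D hX A₀ h).ne').smul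
    ((continuous_id.matrix_adjugate).continuousAt.comp (contAt_M X D h))

lemma contAt_LRE (hX : X.rank = p) {A₀ : ℝ} (hA₀ : 0 ≤ A₀) (hDpos : ∀ j, 0 < D j) :
    ContinuousAt (fun A =>
      ((Xᵀ * Wmat D A * X).det) ^ (-(1 : ℝ) / 2) * (∏ j, (A + D j)) ^ (-(1 : ℝ) / 2) *
        Real.exp (-(1 / 2) * (y ⬝ᵥ (Wmat D A - Wmat D A * X * (Xᵀ * Wmat D A * X)⁻¹ * Xᵀ *
          Wmat D A).mulVec y))) A₀ := by
  have h : ∀ j, 0 < A₀ + D j := fun j => add_pos_of_nonneg_of_pos hA₀ (hDpos j)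
  have c1 : ContinuousAt (fun A => ((Xᵀ * Wmat D A * X).det) ^ (-(1 : ℝ) / 2)) A₀ :=
    (contAt_detM X D h).rpow_const (Or.inl (detM_pos X D hX A₀ h).ne')
  have c2 : ContinuousAt (fun A : ℝ => (∏ j, (A + D j)) ^ (-(1 : ℝ) / 2)) A₀ := by
    have hprod : ContinuousAt (fun A : ℝ => ∏ j, (A + D j)) A₀ :=
      (continuous_finset_prod Finset.univ fun j _ =>
        (continuous_id.add continuous_const)).continuousAt
    have hppos : (0:ℝ) < ∏ j, (A₀ + D j) := Finset.prod_pos fun j _ => h j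
    exact hprod.rpow_const (Or.inl hppos.ne')
  have cP : ContinuousAt (fun A => Wmat D A - Wmat D A * X * (Xᵀ * Wmat D A * X)⁻¹ * Xᵀ *
      Wmat D A) A₀ :=
    (contAt_Wmat D h).sub
      (caMul (caMul (caMul (caMul (contAt_Wmat D h) continuousAt_const)
        (contAt_Minv X D hX h)) continuousAt_const) (contAt_Wmat D h))
  have cq : ContinuousAt (fun A => y ⬝ᵥ (Wmat D A - Wmat D A * X * (Xᵀ * Wmat D A * X)⁻¹ * Xᵀ *
      Wmat D A).mulVec y) A₀ := by
    have hc : Continuous (fun N : Matrix (Fin m) (Fin m) ℝ => y ⬝ᵥ N.mulVec y) :=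
      continuous_const.dotProduct (continuous_id.matrix_mulVec continuous_const)
    exact hc.continuousAt.comp cP
  exact (c1.mul c2).mul
    (Real.continuous_exp.continuousAt.comp (continuousAt_const.mul cq))

end Cont

section Asymp

variable {m p : ℕ} (X : Matrix (Fin m) (Fin p) ℝ) (D : Fin m → ℝ) (y : Fin m → ℝ)

lemma tendsto_pow_mul_detM (hDpos : ∀ j, 0 < D j) :
    Filter.Tendsto (fun A : ℝ => A ^ (p : ℕ) * (Xᵀ * Wmat D A * X).det)
      Filter.atTop (𝓝 ((Xᵀ * X).det)) := by
  have key : ∀ A : ℝ, A ^ (p : ℕ) * (Xᵀ * Wmat D A * X).det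
      = (Xᵀ * Matrix.diagonal (fun j => A * (A + D j)⁻¹) * X).det := by
    intro A
    have h1 : Matrix.diagonal (fun j => A * (A + D j)⁻¹) = A • Wmat D A := by
      rw [Wmat, ← Matrix.diagonal_smul]
      exact congrArg _ (funext fun j => rfl)
    rw [h1, Matrix.mul_smul, Matrix.smul_mul, Matrix.det_smul]
    simp
  simp only [key]
  have hΦ : Continuous (fun v : Fin m → ℝ => (Xᵀ * Matrix.diagonal v * X).det) :=
    (((continuous_const.matrix_mul (Continuous.matrix_diagonal continuous_id)).matrix_mul
      continuous_const)).matrix_det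
  have hv : Filter.Tendsto (fun A : ℝ => (fun j => A * (A + D j)⁻¹)) Filter.atTop
      (𝓝 (fun _ => (1:ℝ))) := by
    rw [tendsto_pi_nhds]
    intro j
    have h1 : Filter.Tendsto (fun A : ℝ => 1 + D j / A) Filter.atTop (𝓝 1) := by
      have := Filter.Tendsto.div_atTop (tendsto_const_nhds (x := D j)) Filter.tendsto_id
      simpa using (tendsto_const_nhds (x := (1:ℝ))).add this
    have h2 : Filter.Tendsto (fun A : ℝ => (1 + D j / A)⁻¹) Filter.atTop (𝓝 1) := by
      simpa using h1.inv₀ one_ne_zero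
    refine h2.congr' ?_
    filter_upwards [Filter.eventually_gt_atTop 0] with A hA
    have hAD : A + D j ≠ 0 := by have := hDpos j; intro h; nlinarith
    field_simp
  have := (hΦ.tendsto _).comp hv
  simpa [Function.comp_def] using this

end Asymp

/-- Theorem 1(ii), strict positivity. -/
theorem stmt4 {m p : ℕ} (hp : 0 < p) (hm : m > p + 2)
    (X : Matrix (Fin m) (Fin p) ℝ) (hX : X.rank = p)
    (D : Fin m → ℝ) (Dmin Dmax : ℝ) (hDmin : 0 < Dmin)
    (hD : ∀ j, Dmin ≤ D j ∧ D j ≤ Dmax)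
    (hplus : ℝ → ℝ) (C : ℝ) (hC : 0 < C)
    (hcont : ContinuousOn hplus (Set.Ici 0)) (h0 : hplus 0 = 0)
    (hpos : ∀ A : ℝ, 0 < A → 0 < hplus A ∧ hplus A ≤ C)
    (i : Fin m) (y : Fin m → ℝ) :
    (∃ Ahat : ℝ, 0 < Ahat ∧
        ∀ A : ℝ, 0 ≤ A →
          hplus A * (A + D i) * LRE X D y A ≤ hplus Ahat * (Ahat + D i) * LRE X D y Ahat) ∧
      ∀ Ahat : ℝ, 0 ≤ Ahat →
        (∀ A : ℝ, 0 ≤ A →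
          hplus A * (A + D i) * LRE X D y A ≤ hplus Ahat * (Ahat + D i) * LRE X D y Ahat) →
        0 < D i / (Ahat + D i) ∧ D i / (Ahat + D i) < 1 := by
  have hDpos : ∀ j, 0 < D j := fun j => lt_of_lt_of_le hDmin (hD j).1
  set g : ℝ → ℝ := fun A => hplus A * (A + D i) * LRE X D y A with hg
  have hADpos : ∀ A : ℝ, 0 ≤ A → ∀ j, 0 < A + D j :=
    fun A hA j => add_pos_of_nonneg_of_pos hA (hDpos j)
  have hLREpos : ∀ A : ℝ, 0 ≤ A → 0 < LRE X D y A :=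
    fun A hA => LRE_pos X D y hX A (hADpos A hA)
  have hGpos : ∀ A : ℝ, 0 < A → 0 < g A := fun A hA =>
    mul_pos (mul_pos (hpos A hA).1 (by have := hDpos i; linarith)) (hLREpos A hA.le)
  have hG0 : g 0 = 0 := by simp [hg, h0]
  -- continuity of g on [0, ∞)
  have hGcont : ContinuousOn g (Set.Ici 0) := by
    have hLREcont : ContinuousOn (LRE X D y) (Set.Ici 0) := by
      have hnice : ContinuousOn (fun A =>
          ((Xᵀ * Wmat D A * X).det) ^ (-(1 : ℝ) / 2) * (∏ j, (A + D j)) ^ (-(1 : ℝ) / 2) *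
            Real.exp (-(1 / 2) * (y ⬝ᵥ (Wmat D A - Wmat D A * X * (Xᵀ * Wmat D A * X)⁻¹ * Xᵀ *
              Wmat D A).mulVec y))) (Set.Ici 0) :=
        fun A hA => (contAt_LRE X D y hX hA hDpos).continuousWithinAt
      exact hnice.congr (fun A hA => LRE_eq X D y A (hADpos A hA))
    exact (hcont.mul ((continuous_id.add continuous_const).continuousOn)).mul hLREcont
  -- g tends to 0 at infinity
  have hdetTop := tendsto_pow_mul_detM X D hDpos
  set c₀ : ℝ := (Xᵀ * X).det with hc₀
  have hc₀pos : 0 < c₀ := by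
    have h1 := posdef_sandwich X hX (fun _ : Fin m => (1:ℝ)) (fun _ => one_pos)
    rw [show Matrix.diagonal (fun _ : Fin m => (1:ℝ)) = 1 from Matrix.diagonal_one,
      Matrix.mul_one] at h1
    exact h1.det_pos
  set e : ℝ := (m:ℝ)/2 - (p:ℝ)/2 - 1 with he
  have hepos : 0 < e := by
    have : (p:ℝ) + 2 < (m:ℝ) := by exact_mod_cast hm
    rw [he]; linarith
  set K : ℝ := C * 2 * (c₀/2) ^ (-(1:ℝ)/2) with hK
  have hbound : ∀ᶠ A in Filter.atTop, g A ≤ K * A ^ (-e) := by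
    have h1 : ∀ᶠ A in Filter.atTop, c₀/2 < A ^ (p : ℕ) * (Xᵀ * Wmat D A * X).det :=
      hdetTop.eventually_const_lt (by linarith)
    filter_upwards [h1, Filter.eventually_ge_atTop (1:ℝ),
      Filter.eventually_ge_atTop (D i)] with A hA1 hA2 hA3
    have hA0 : (0:ℝ) < A := lt_of_lt_of_le one_pos hA2
    have hADj : ∀ j, 0 < A + D j := hADpos A hA0.le
    have hdet := detM_pos X D hX A hADj
    have hd1 : (c₀/2) * A ^ (-(p:ℝ)) ≤ (Xᵀ * Wmat D A * X).det := by
      rw [Real.rpow_neg hA0.le, Real.rpow_natCast]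
      have hApow : (0:ℝ) < A ^ (p : ℕ) := pow_pos hA0 p
      calc (c₀/2) * (A ^ (p:ℕ))⁻¹
          ≤ (A ^ (p:ℕ) * (Xᵀ * Wmat D A * X).det) * (A ^ (p:ℕ))⁻¹ := by
            apply mul_le_mul_of_nonneg_right hA1.le (by positivity)
        _ = (Xᵀ * Wmat D A * X).det := by field_simp
    have hd2 : ((Xᵀ * Wmat D A * X).det) ^ (-(1:ℝ)/2)
        ≤ ((c₀/2) * A ^ (-(p:ℝ))) ^ (-(1:ℝ)/2) :=
      Real.rpow_le_rpow_of_nonpos (by positivity) hd1 (by norm_num)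
    have hd3 : ((c₀/2) * A ^ (-(p:ℝ))) ^ (-(1:ℝ)/2) = (c₀/2) ^ (-(1:ℝ)/2) * A ^ ((p:ℝ)/2) := by
      rw [Real.mul_rpow (by positivity) (by positivity), ← Real.rpow_mul hA0.le,
        show (-(p:ℝ)) * (-(1:ℝ)/2) = (p:ℝ)/2 by ring]
    have hprodge : A ^ (m:ℕ) ≤ ∏ j, (A + D j) := by
      calc A ^ (m:ℕ) = ∏ _j : Fin m, A := by rw [Finset.prod_const, Finset.card_univ]; simp
        _ ≤ ∏ j, (A + D j) := Finset.prod_le_prod (fun _ _ => hA0.le)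
            (fun j _ => by have := hDpos j; linarith)
    have hp2 : (∏ j, (A + D j)) ^ (-(1:ℝ)/2) ≤ A ^ (-(m:ℝ)/2) := by
      calc (∏ j, (A + D j)) ^ (-(1:ℝ)/2) ≤ (A ^ (m:ℕ)) ^ (-(1:ℝ)/2) :=
            Real.rpow_le_rpow_of_nonpos (pow_pos hA0 m) hprodge (by norm_num)
        _ = A ^ (-(m:ℝ)/2) := by
            rw [← Real.rpow_natCast A m, ← Real.rpow_mul hA0.le,
              show ((m:ℕ):ℝ) * (-(1:ℝ)/2) = -(m:ℝ)/2 by push_cast; ring]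
    have hLLE := LRE_le X D y hX A hADj
    have hstep1 : g A ≤ C * (A + D i) * LRE X D y A := by
      have := (hpos A hA0).2
      have h4 := (hLREpos A hA0.le).le
      have h5 : (0:ℝ) ≤ A + D i := by have := hDpos i; linarith
      apply mul_le_mul_of_nonneg_right (mul_le_mul_of_nonneg_right this h5) h4
    have hfac : ((Xᵀ * Wmat D A * X).det) ^ (-(1:ℝ)/2) * (∏ j, (A + D j)) ^ (-(1:ℝ)/2)
        ≤ ((c₀/2) ^ (-(1:ℝ)/2) * A ^ ((p:ℝ)/2)) * A ^ (-(m:ℝ)/2) := by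
      refine mul_le_mul (le_of_le_of_eq hd2 hd3) hp2
        (Real.rpow_nonneg (Finset.prod_nonneg fun j _ => (hADj j).le) _)
        (mul_nonneg (Real.rpow_nonneg (by linarith) _) (Real.rpow_nonneg hA0.le _))
    have hADi : (0:ℝ) < A + D i := hADj i
    calc g A ≤ C * (A + D i) * LRE X D y A := hstep1
      _ ≤ C * (A + D i) * (((Xᵀ * Wmat D A * X).det) ^ (-(1:ℝ)/2) *
            (∏ j, (A + D j)) ^ (-(1:ℝ)/2)) := by
          apply mul_le_mul_of_nonneg_left hLLE (by positivity)
      _ ≤ C * (2*A) * (((c₀/2) ^ (-(1:ℝ)/2) * A ^ ((p:ℝ)/2)) * A ^ (-(m:ℝ)/2)) := by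
          refine mul_le_mul (by nlinarith) hfac
            (mul_nonneg (Real.rpow_nonneg hdet.le _)
              (Real.rpow_nonneg (Finset.prod_nonneg fun j _ => (hADj j).le) _))
            (mul_nonneg hC.le (by linarith))
      _ = K * A ^ (-e) := by
          have hexp : A ^ (-e) = A ^ ((1:ℝ) + ((p:ℝ)/2 + (-(m:ℝ)/2))) := by
            rw [he]; ring_nf
          rw [hexp, Real.rpow_add hA0, Real.rpow_add hA0, Real.rpow_one, hK]
          ring
  have hKt : Filter.Tendsto (fun A : ℝ => K * A ^ (-e)) Filter.atTop (𝓝 0) := by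
    simpa using (tendsto_rpow_neg_atTop hepos).const_mul K
  have hGtends : Filter.Tendsto g Filter.atTop (𝓝 0) := by
    apply tendsto_of_tendsto_of_tendsto_of_le_of_le' tendsto_const_nhds hKt
    · filter_upwards [Filter.eventually_gt_atTop (0:ℝ)] with A hA
      exact (hGpos A hA).le
    · exact hbound
  -- existence of a positive maximizer
  have hg1 : 0 < g 1 := hGpos 1 one_pos
  obtain ⟨R0, hR0⟩ := Filter.eventually_atTop.mp (hGtends.eventually_lt_const hg1)
  set R : ℝ := max R0 1 with hRdef
  have hR1 : (1:ℝ) ≤ R := le_max_right _ _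
  obtain ⟨Ahat, hmem, hmax⟩ := (isCompact_Icc (a := (0:ℝ)) (b := R)).exists_isMaxOn
    ⟨0, le_refl 0, by linarith⟩ (hGcont.mono (fun x hx => hx.1))
  have h1mem : (1:ℝ) ∈ Set.Icc (0:ℝ) R := ⟨zero_le_one, hR1⟩
  have hglobal : ∀ A, 0 ≤ A → g A ≤ g Ahat := by
    intro A hA
    by_cases hcase : A ≤ R
    · exact hmax ⟨hA, hcase⟩
    · push_neg at hcase
      have hAR0 : R0 ≤ A := le_trans (le_trans (le_max_left _ _) hcase.le) (le_refl A)
      exact le_trans (hR0 A hAR0).le (hmax h1mem)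
  have hgA : 0 < g Ahat := lt_of_lt_of_le hg1 (hmax h1mem)
  have hApos : 0 < Ahat := by
    rcases eq_or_lt_of_le hmem.1 with h|h
    · exfalso; rw [← h] at hgA; rw [hG0] at hgA; exact lt_irrefl 0 hgA
    · exact h
  refine ⟨⟨Ahat, hApos, fun A hA => hglobal A hA⟩, ?_⟩
  intro Ahat' hA' hmax'
  have hpos' : 0 < g Ahat' := lt_of_lt_of_le hg1 (hmax' 1 zero_le_one)
  have hA'pos : 0 < Ahat' := by
    rcases eq_or_lt_of_le hA' with h|h
    · exfalso; rw [← h] at hpos'; rw [hG0] at hpos'; exact lt_irrefl 0 hpos'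
    · exact h
  have hDi : 0 < D i := hDpos i
  constructor
  · exact div_pos hDi (by linarith)
  · rw [div_lt_one (by linarith)]; linarith
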